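/- Let M be an L_a-structure, v ∈ M a certified element, and k ∈ ℕ such that M ⊨ m̄ ≠ v for all m < k. Suppose m ≤ k² + k, l ≤ k, and m ≠ l. Then M ⊨ m̄ ≠ l̄. -/
import Mathlib


open FirstOrder FirstOrder.Language

/-- Function symbols of the arithmetic language `L_a = {0, S, +, ×, ≤}`. -/
inductive AFunc : ℕ → Type
  | zero : AFunc 0
  | succ : AFunc 1
  | add : AFunc 2
  | mul : AFunc 2

/-- Relation symbols of `L_a`: the single binary relation `≤`. -/
inductive ARel : ℕ → Type
  | le : ARel 2

/-- The first-order language of arithmetic `L_a = {0, S, +, ×, ≤}`. -/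
def La : Language := ⟨AFunc, ARel⟩

/-- The standard model ℕ as an `La`-structure. -/
instance : La.Structure ℕ where
  funMap := fun {n} f => match f with
    | .zero => fun _ => 0
    | .succ => fun v => v 0 + 1
    | .add => fun v => v 0 + v 1
    | .mul => fun v => v 0 * v 1
  RelMap := fun {n} r => match r with
    | .le => fun v => v 0 ≤ v 1

/-- The term `0`. -/
def zeroT {β : Type} : La.Term β := Term.func AFunc.zero ![]
/-- The term `S t`. -/
def succT {β : Type} (t : La.Term β) : La.Term β := Term.func AFunc.succ ![t]
/-- The term `t + u`. -/
def addT {β : Type} (t u : La.Term β) : La.Term β := Term.func AFunc.add ![t, u]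
/-- The term `t × u`. -/
def mulT {β : Type} (t u : La.Term β) : La.Term β := Term.func AFunc.mul ![t, u]

/-- The numeral `S…S0`. -/
def num {β : Type} : ℕ → La.Term β
  | 0 => zeroT
  | n + 1 => succT (num n)

/-- The atomic formula `t ≤ u`. -/
def leF {α : Type} {n : ℕ} (t u : La.Term (α ⊕ Fin n)) : La.BoundedFormula α n :=
  Relations.boundedFormula ARel.le ![t, u]

/-- The formula `t < u`, i.e. `t ≤ u ∧ t ≠ u`. -/
def ltF {α : Type} {n : ℕ} (t u : La.Term (α ⊕ Fin n)) : La.BoundedFormula α n :=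
  leF t u ⊓ ∼(t =' u)

/-- Lift a term of context `n` to context `n+1`. -/
def liftT {α : Type} {n : ℕ} (t : La.Term (α ⊕ Fin n)) : La.Term (α ⊕ Fin (n + 1)) :=
  t.relabel (Sum.map id Fin.castSucc)

/-- The de Bruijn variable `i` as a term. -/
def vr {α : Type} {n : ℕ} (i : Fin n) : La.Term (α ⊕ Fin n) := Term.var (Sum.inr i)

section Semantics
open FirstOrder.Language.Structure

variable (M : Type) [La.Structure M]

/-- The interpretation of `0` in `M`. -/
def zM : M := funMap (L := La) AFunc.zero ![]
/-- The interpretation of successor in `M`. -/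
def sM (x : M) : M := funMap (L := La) AFunc.succ ![x]
/-- The interpretation of addition in `M`. -/
def addM (x y : M) : M := funMap (L := La) AFunc.add ![x, y]
/-- The interpretation of multiplication in `M`. -/
def mulM (x y : M) : M := funMap (L := La) AFunc.mul ![x, y]
/-- The interpretation of `≤` in `M`. -/
def leM (x y : M) : Prop := RelMap (L := La) ARel.le ![x, y]
/-- `x < y` in `M`: `x ≤ y ∧ x ≠ y`. -/
def ltM (x y : M) : Prop := leM M x y ∧ x ≠ y
/-- The interpretation of the numeral `m̄` in `M`. -/
def natM : ℕ → M
  | 0 => zM M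
  | m + 1 => sM M (natM m)

/-- An element `v` of an `L_a`-structure is *certified* if it satisfies the
certification axioms A1–A10. -/
structure Certified (v : M) : Prop where
  a1 : leM M (zM M) v
  a2 : ∀ x : M, ltM M x v → leM M (sM M x) v
  a3 : ∀ x : M, leM M x (zM M) ↔ x = zM M
  a4 : ∀ x : M, ltM M x v → ∀ y : M, leM M y (sM M x) ↔ (leM M y x ∨ y = sM M x)
  a5 : ∀ x y z : M, leM M x v → leM M y v → leM M z v →
    sM M (addM M (mulM M x y) z) ≠ zM M
  a6 : ∀ x y z w : M, leM M x v → leM M y v → leM M z v → leM M w v →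
    sM M (addM M (mulM M x y) z) = sM M w → addM M (mulM M x y) z = w
  a7 : ∀ x y : M, leM M x v → leM M y v → addM M (mulM M x y) (zM M) = mulM M x y
  a8 : ∀ x y z : M, leM M x v → leM M y v → leM M z v →
    addM M (mulM M x y) (sM M z) = sM M (addM M (mulM M x y) z)
  a9 : ∀ x : M, leM M x v → mulM M x (zM M) = zM M
  a10 : ∀ x y : M, leM M x v → leM M y v → mulM M x (sM M y) = addM M (mulM M x y) x

end Semantics

lemma natM_succ (M : Type) [La.Structure M] (n : ℕ) :
    natM M (n + 1) = sM M (natM M n) := rfl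

lemma natM_zero (M : Type) [La.Structure M] : natM M 0 = zM M := rfl

lemma le_v (M : Type) [La.Structure M] (v : M) (hv : Certified M v)
    (k : ℕ) (hk : ∀ m : ℕ, m < k → natM M m ≠ v) :
    ∀ m, m ≤ k → leM M (natM M m) v := by
  intro m
  induction m with
  | zero => intro _; exact hv.a1
  | succ n ih =>
    intro h
    exact hv.a2 _ ⟨ih (Nat.le_of_succ_le h), hk n (Nat.lt_of_succ_le h)⟩

lemma add_eval (M : Type) [La.Structure M] (v : M) (hv : Certified M v)
    (k : ℕ) (hk : ∀ m : ℕ, m < k → natM M m ≠ v)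
    (m0 : ℕ) (hm0 : m0 ≤ k)
    (hmul : mulM M (natM M k) (natM M m0) = natM M (k * m0)) :
    ∀ m1, m1 ≤ k →
      addM M (mulM M (natM M k) (natM M m0)) (natM M m1) = natM M (k * m0 + m1) := by
  intro m1
  induction m1 with
  | zero =>
    intro _
    rw [natM_zero, hv.a7 _ _ (le_v M v hv k hk k le_rfl) (le_v M v hv k hk m0 hm0)]
    exact hmul
  | succ n ih =>
    intro h
    rw [natM_succ,
      hv.a8 _ _ _ (le_v M v hv k hk k le_rfl) (le_v M v hv k hk m0 hm0)
        (le_v M v hv k hk n (Nat.le_of_succ_le h)),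
      ih (Nat.le_of_succ_le h)]
    rfl

lemma mul_eval (M : Type) [La.Structure M] (v : M) (hv : Certified M v)
    (k : ℕ) (hk : ∀ m : ℕ, m < k → natM M m ≠ v) :
    ∀ m0, m0 ≤ k → mulM M (natM M k) (natM M m0) = natM M (k * m0) := by
  intro m0
  induction m0 with
  | zero =>
    intro _
    rw [natM_zero, hv.a9 _ (le_v M v hv k hk k le_rfl)]
    exact congrArg (natM M) (Nat.mul_zero k).symm
  | succ n ih =>
    intro h
    have hn : n ≤ k := Nat.le_of_succ_le h
    rw [natM_succ, hv.a10 _ _ (le_v M v hv k hk k le_rfl) (le_v M v hv k hk n hn),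
      add_eval M v hv k hk n hn (ih hn) k le_rfl]
    exact congrArg (natM M) (by ring)

lemma decomp (k n : ℕ) (hkpos : 0 < k) (hn : n ≤ k ^ 2 + k) :
    ∃ a b, a ≤ k ∧ b ≤ k ∧ n = k * a + b := by
  rcases le_or_gt (n / k) k with h | h
  · refine ⟨n / k, n % k, h, le_of_lt (Nat.mod_lt _ hkpos), ?_⟩
    exact (Nat.div_add_mod n k).symm
  · have h1 : (k + 1) * k ≤ (n / k) * k := Nat.mul_le_mul_right _ h
    have h2 : (n / k) * k ≤ n := Nat.div_mul_le_self n k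
    have e1 : (k + 1) * k = k * k + k := by ring
    have e2 : k ^ 2 = k * k := by ring
    exact ⟨k, k, le_rfl, le_rfl, by linarith⟩

lemma succ_ne_zeroM (M : Type) [La.Structure M] (v : M) (hv : Certified M v)
    (k : ℕ) (hk : ∀ m : ℕ, m < k → natM M m ≠ v)
    (hkpos : 0 < k) (n : ℕ) (hn : n ≤ k ^ 2 + k) :
    natM M (n + 1) ≠ zM M := by
  obtain ⟨a, b, ha, hb, hab⟩ := decomp k n hkpos hn
  have hrep : addM M (mulM M (natM M k) (natM M a)) (natM M b) = natM M n := by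
    rw [add_eval M v hv k hk a ha (mul_eval M v hv k hk a ha) b hb]
    exact congrArg (natM M) hab.symm
  intro h
  exact hv.a5 _ _ _ (le_v M v hv k hk k le_rfl) (le_v M v hv k hk a ha)
    (le_v M v hv k hk b hb) (by rw [hrep]; exact h)

lemma mainM (M : Type) [La.Structure M] (v : M) (hv : Certified M v)
    (k : ℕ) (hk : ∀ m : ℕ, m < k → natM M m ≠ v) (hkpos : 0 < k) :
    ∀ m, m ≤ k ^ 2 + k → ∀ l, l ≤ k → m ≠ l → natM M m ≠ natM M l := by
  intro m
  induction m with
  | zero =>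
    intro _ l hl hne h
    cases l with
    | zero => exact hne rfl
    | succ l' =>
      exact succ_ne_zeroM M v hv k hk hkpos l'
        (le_trans (by omega) (Nat.le_add_left k (k ^ 2))) h.symm
  | succ n ih =>
    intro hm l hl hne h
    cases l with
    | zero =>
      exact succ_ne_zeroM M v hv k hk hkpos n (Nat.le_of_succ_le hm) h
    | succ l' =>
      obtain ⟨a, b, ha, hb, hab⟩ := decomp k n hkpos (Nat.le_of_succ_le hm)
      have hrep : addM M (mulM M (natM M k) (natM M a)) (natM M b) = natM M n := by
        rw [add_eval M v hv k hk a ha (mul_eval M v hv k hk a ha) b hb]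
        exact congrArg (natM M) hab.symm
      have hcancel := hv.a6 (natM M k) (natM M a) (natM M b) (natM M l')
        (le_v M v hv k hk k le_rfl) (le_v M v hv k hk a ha)
        (le_v M v hv k hk b hb) (le_v M v hv k hk l' (by omega))
        (by rw [hrep]; exact h)
      rw [hrep] at hcancel
      exact ih (Nat.le_of_succ_le hm) l' (by omega) (by omega) hcancel

/-- if `v` is certified and `m̄ ≠ v` in `M` for all `m < k`, then for
`m ≤ k² + k`, `l ≤ k` with `m ≠ l`, we have `M ⊨ m̄ ≠ l̄`. -/
theorem statement7 (M : Type) [La.Structure M] (v : M) (hv : Certified M v)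
    (k : ℕ) (hk : ∀ m : ℕ, m < k → natM M m ≠ v) :
    ∀ m l : ℕ, m ≤ k ^ 2 + k → l ≤ k → m ≠ l → natM M m ≠ natM M l := by
  intro m l hm hl hne
  rcases Nat.eq_zero_or_pos k with rfl | hkpos
  · norm_num at hm hl
    exact absurd (hm.trans hl.symm) hne
  · exact mainM M v hv k hk hkpos m hm l hl hne
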